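/- Fix σ², G, K, η, p, p_b, W, λ > 0, set A := G²ηp/σ², X := Gη(pG + p_b·K)/σ², let z† solve z·ln z − z + 1 = A with z† > 1, α := λW·G·η·K/(z†·σ²·ln 2), E^lim := p_b(z†−1)/(z†−1+X), and E^o := p_b(z‡−1)/(z‡−1+X) with z‡ > 1 solving z·ln z − z + 1 = X. For 0 ≤ ν < α, let z^§(ν) be the unique z > 1 with z·ln z + (ν·p_b·ln 2/(λW) − 1)·z + 1 = X and set γ(ν) := p_b(z^§(ν)−1)σ²/((z^§(ν)−1)σ² + Gη(pG + p_b·K)). Then γ(ν) is the unique E ∈ (E^lim, E^o] satisfying β(E) = ν, where β(E) = −(λW/p_b)·log₂(1 + X·E/(p_b − E)) + λW·X/((p_b − E + X·E)·ln 2); moreover γ is strictly decreasing on [0, α), γ(0) = E^o, and γ(ν) → E^lim as ν → α from below. -/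

import Mathlib

lemma f_hasDeriv {z : ℝ} (hz : 0 < z) :
    HasDerivAt (fun z : ℝ => z * Real.log z - z + 1) (Real.log z) z := by
  have h1 : HasDerivAt (fun z : ℝ => z * Real.log z) (1 * Real.log z + z * z⁻¹) z :=
    (hasDerivAt_id z).mul (Real.hasDerivAt_log hz.ne')
  have h2 := (h1.sub (hasDerivAt_id z)).add_const 1
  exact h2.congr_deriv (by rw [one_mul, mul_inv_cancel₀ hz.ne']; ring)

lemma f_contOn : ContinuousOn (fun z : ℝ => z * Real.log z - z + 1) (Set.Ici 1) := by
  apply ContinuousOn.add _ continuousOn_const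
  apply ContinuousOn.sub _ continuousOn_id
  exact continuousOn_id.mul (Real.continuousOn_log.mono (fun x hx => by
    simp only [Set.mem_compl_iff, Set.mem_singleton_iff]
    intro h
    rw [h] at hx
    simp only [Set.mem_Ici] at hx
    linarith))

lemma f_mono : StrictMonoOn (fun z : ℝ => z * Real.log z - z + 1) (Set.Ici 1) := by
  apply strictMonoOn_of_deriv_pos (convex_Ici 1) f_contOn
  intro z hz
  rw [interior_Ici] at hz
  rw [(f_hasDeriv (by linarith [hz.out] : (0:ℝ) < z)).deriv]
  exact Real.log_pos hz

lemma f_lb {a b : ℝ} (ha : 1 ≤ a) (hab : a ≤ b) :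
    (b - a) * Real.log a ≤ (b * Real.log b - b + 1) - (a * Real.log a - a + 1) := by
  have ha0 : (0:ℝ) < a := lt_of_lt_of_le one_pos ha
  have hb0 : (0:ℝ) < b := lt_of_lt_of_le ha0 hab
  have h1 : Real.log (a/b) ≤ a/b - 1 := Real.log_le_sub_one_of_pos (by positivity)
  rw [Real.log_div ha0.ne' hb0.ne'] at h1
  have h2 : b - a ≤ b * (Real.log b - Real.log a) := by
    have h3 := mul_le_mul_of_nonneg_left h1 hb0.le
    have hb' : b * (a/b - 1) = a - b := by field_simp
    nlinarith
  have hid : b * Real.log b - a * Real.log a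
      = (b - a) * Real.log a + b * (Real.log b - Real.log a) := by ring
  linarith

lemma g_anti {X : ℝ} (hX : 0 < X) :
    StrictAntiOn (fun z : ℝ => (X - (z * Real.log z - z + 1)) / z) (Set.Ici 1) := by
  apply strictAntiOn_of_deriv_neg (convex_Ici 1)
  · exact (continuousOn_const.sub f_contOn).div continuousOn_id
      (fun x hx => ne_of_gt (lt_of_lt_of_le one_pos hx))
  · intro z hz
    rw [interior_Ici] at hz
    have hz1 : (1:ℝ) < z := hz
    have hz0 : (0:ℝ) < z := by linarith
    have hd2 : deriv (fun z : ℝ => (X - (z * Real.log z - z + 1)) / z) z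
        = ((0 - Real.log z) * z - (X - (z * Real.log z - z + 1)) * 1) / z ^ 2 := by
      apply HasDerivAt.deriv
      exact ((hasDerivAt_const z X).sub (f_hasDeriv hz0)).div (hasDerivAt_id' z) hz0.ne'
    rw [hd2]
    apply div_neg_of_neg_of_pos _ (by positivity)
    have : (0 - Real.log z) * z - (X - (z * Real.log z - z + 1)) * 1 = 1 - z - X := by ring
    rw [this]
    linarith

set_option maxHeartbeats 1000000 in
/-- For 0 ≤ ν < α, γ(ν) is the unique E ∈ (E^lim, E^o] with β(E) = ν;
moreover γ is strictly decreasing on [0, α), γ(0) = E^o and γ(ν) → E^lim as ν → α⁻. -/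
theorem stmt_14 (σ2 G K η p pb W lam : ℝ)
    (hσ2 : 0 < σ2) (hG : 0 < G) (hK : 0 < K) (hη : 0 < η)
    (hp : 0 < p) (hpb : 0 < pb) (hW : 0 < W) (hlam : 0 < lam)
    (A X : ℝ)
    (hA : A = G ^ 2 * η * p / σ2)
    (hX : X = G * η * (p * G + pb * K) / σ2)
    (zdag : ℝ) (hzdag1 : 1 < zdag)
    (hzdag : zdag * Real.log zdag - zdag + 1 = A)
    (zdd : ℝ) (hzdd1 : 1 < zdd)
    (hzdd : zdd * Real.log zdd - zdd + 1 = X)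
    (Elim Eo α : ℝ)
    (hElim : Elim = pb * (zdag - 1) / (zdag - 1 + X))
    (hEo : Eo = pb * (zdd - 1) / (zdd - 1 + X))
    (hα : α = lam * W * G * η * K / (zdag * σ2 * Real.log 2))
    (zsect : ℝ → ℝ)
    (hzsect : ∀ ν : ℝ, 0 ≤ ν → ν < α → 1 < zsect ν ∧
      zsect ν * Real.log (zsect ν)
        + (ν * pb * Real.log 2 / (lam * W) - 1) * zsect ν + 1 = X)
    (γ : ℝ → ℝ)
    (hγ : ∀ ν : ℝ, γ ν = pb * (zsect ν - 1) * σ2 /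
      ((zsect ν - 1) * σ2 + G * η * (p * G + pb * K)))
    (β : ℝ → ℝ)
    (hβ : ∀ E : ℝ, β E = -(lam * W / pb) * Real.logb 2 (1 + X * E / (pb - E))
        + lam * W * X / ((pb - E + X * E) * Real.log 2)) :
    (∀ ν : ℝ, 0 ≤ ν → ν < α →
      γ ν ∈ Set.Ioc Elim Eo ∧ β (γ ν) = ν ∧
      ∀ E ∈ Set.Ioc Elim Eo, β E = ν → E = γ ν) ∧
    StrictAntiOn γ (Set.Ico 0 α) ∧
    γ 0 = Eo ∧
    Filter.Tendsto γ (nhdsWithin α (Set.Iio α)) (nhds Elim) := by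
  have hlog2 : (0:ℝ) < Real.log 2 := Real.log_pos (by norm_num)
  have hX0 : 0 < X := by rw [hX]; positivity
  have hA0 : 0 < A := by rw [hA]; positivity
  have hXA : A < X := by
    have h1 : X - A = G * η * (pb * K) / σ2 := by rw [hA, hX]; ring
    have h2 : 0 < G * η * (pb * K) / σ2 := by positivity
    linarith
  have hlzdag : 0 < Real.log zdag := Real.log_pos hzdag1
  have hzdag0 : (0:ℝ) < zdag := by linarith
  have hα0 : 0 < α := by rw [hα]; positivity
  have hlamW : (0:ℝ) < lam * W := by positivity
  -- zdag < zdd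
  have hzdd_gt : zdag < zdd := by
    by_contra h
    push_neg at h
    have hm : zdd * Real.log zdd - zdd + 1 ≤ zdag * Real.log zdag - zdag + 1 :=
      f_mono.monotoneOn (Set.mem_Ici.mpr hzdd1.le) (Set.mem_Ici.mpr hzdag1.le) h
    linarith
  -- monotonicity of the E-map
  have hEm_mono : ∀ a b : ℝ, 1 ≤ a → a < b →
      pb * (a - 1) / (a - 1 + X) < pb * (b - 1) / (b - 1 + X) := by
    intro a b ha hab
    have h1 : 0 < a - 1 + X := by linarith
    have h2 : 0 < b - 1 + X := by linarith
    rw [div_lt_div_iff₀ h1 h2]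
    nlinarith [mul_pos (mul_pos hpb hX0) (show (0:ℝ) < b - a by linarith)]
  have hEm_mono_le : ∀ a b : ℝ, 1 ≤ a → a ≤ b →
      pb * (a - 1) / (a - 1 + X) ≤ pb * (b - 1) / (b - 1 + X) := by
    intro a b ha hab
    rcases eq_or_lt_of_le hab with h | h
    · rw [h]
    · exact (hEm_mono a b ha h).le
  -- the σ2-form equals the X-form of the E-map
  have hEmσ : ∀ z : ℝ, pb * (z - 1) * σ2 / ((z - 1) * σ2 + G * η * (p * G + pb * K))
      = pb * (z - 1) / (z - 1 + X) := by
    intro z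
    have hS : G * η * (p * G + pb * K) = X * σ2 := by rw [hX]; field_simp
    rw [hS, show (z - 1) * σ2 + X * σ2 = (z - 1 + X) * σ2 from by ring]
    rw [mul_div_mul_right _ _ hσ2.ne']
  have hγEm : ∀ ν : ℝ, γ ν = pb * (zsect ν - 1) / (zsect ν - 1 + X) := by
    intro ν
    rw [hγ, hEmσ]
  -- key β formula
  have hkey : ∀ z : ℝ, 1 < z → β (pb * (z - 1) / (z - 1 + X))
      = lam * W / (pb * Real.log 2) * ((X - (z * Real.log z - z + 1)) / z) := by
    intro z hz
    have hD : 0 < z - 1 + X := by linarith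
    have hz0 : (0:ℝ) < z := by linarith
    have h1 : pb - pb * (z - 1) / (z - 1 + X) = pb * X / (z - 1 + X) := by
      field_simp [hD.ne']
      ring
    have h2 : 1 + X * (pb * (z - 1) / (z - 1 + X)) / (pb - pb * (z - 1) / (z - 1 + X)) = z := by
      rw [h1]
      field_simp [hD.ne', hpb.ne', hX0.ne']
      ring
    have h3 : pb - pb * (z - 1) / (z - 1 + X) + X * (pb * (z - 1) / (z - 1 + X))
        = pb * X * z / (z - 1 + X) := by
      rw [h1]
      field_simp [hD.ne']
      ring
    rw [hβ, h2, h3, Real.logb]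
    field_simp [hpb.ne', hlog2.ne', hz0.ne', hD.ne', hX0.ne']
    ring
  -- z^§ ≤ z‡
  have hzle : ∀ ν : ℝ, 0 ≤ ν → ν < α → zsect ν ≤ zdd := by
    intro ν hν0 hνα
    obtain ⟨hz1, hz2⟩ := hzsect ν hν0 hνα
    by_contra h
    push_neg at h
    have hm : zdd * Real.log zdd - zdd + 1 < zsect ν * Real.log (zsect ν) - zsect ν + 1 :=
      f_mono (Set.mem_Ici.mpr hzdd1.le) (Set.mem_Ici.mpr (by linarith)) h
    have hc : 0 ≤ ν * pb * Real.log 2 / (lam * W) * zsect ν := by positivity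
    nlinarith
  have hcα : α * pb * Real.log 2 / (lam * W) * zdag = X - A := by
    rw [hα, hA, hX]
    field_simp [hzdag0.ne', hσ2.ne', hlog2.ne', hlam.ne', hW.ne']
    ring
  -- zdag < z^§
  have hzgt : ∀ ν : ℝ, 0 ≤ ν → ν < α → zdag < zsect ν := by
    intro ν hν0 hνα
    obtain ⟨hz1, hz2⟩ := hzsect ν hν0 hνα
    by_contra h
    push_neg at h
    have hf : zsect ν * Real.log (zsect ν) - zsect ν + 1 ≤ zdag * Real.log zdag - zdag + 1 :=
      f_mono.monotoneOn (Set.mem_Ici.mpr hz1.le) (Set.mem_Ici.mpr hzdag1.le) h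
    have hcpos : (0:ℝ) ≤ ν * pb * Real.log 2 / (lam * W) := by positivity
    have h1 : ν * pb * Real.log 2 / (lam * W) * zsect ν
        ≤ ν * pb * Real.log 2 / (lam * W) * zdag :=
      mul_le_mul_of_nonneg_left h hcpos
    have h2 : ν * pb * Real.log 2 / (lam * W) * zdag
        < α * pb * Real.log 2 / (lam * W) * zdag := by
      have h3 : ν * (pb * Real.log 2 / (lam * W)) < α * (pb * Real.log 2 / (lam * W)) :=
        mul_lt_mul_of_pos_right hνα (by positivity)
      calc ν * pb * Real.log 2 / (lam * W) * zdag
          = ν * (pb * Real.log 2 / (lam * W)) * zdag := by ring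
        _ < α * (pb * Real.log 2 / (lam * W)) * zdag := mul_lt_mul_of_pos_right h3 hzdag0
        _ = α * pb * Real.log 2 / (lam * W) * zdag := by ring
    nlinarith
  -- β (γ ν) = ν
  have hβγ : ∀ ν : ℝ, 0 ≤ ν → ν < α → β (γ ν) = ν := by
    intro ν hν0 hνα
    obtain ⟨hz1, hz2⟩ := hzsect ν hν0 hνα
    have hz0 : (0:ℝ) < zsect ν := by linarith
    rw [hγEm, hkey _ hz1]
    have hXf : X - (zsect ν * Real.log (zsect ν) - zsect ν + 1)
        = ν * pb * Real.log 2 / (lam * W) * zsect ν := by linear_combination -hz2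
    rw [hXf]
    field_simp [hpb.ne', hlog2.ne', hz0.ne', hlam.ne', hW.ne']
  refine ⟨?_, ?_, ?_, ?_⟩
  · -- existence and uniqueness
    intro ν hν0 hνα
    obtain ⟨hz1, hz2⟩ := hzsect ν hν0 hνα
    have hz0 : (0:ℝ) < zsect ν := by linarith
    have hmem : γ ν ∈ Set.Ioc Elim Eo := by
      constructor
      · rw [hElim, hγEm]
        exact hEm_mono zdag (zsect ν) hzdag1.le (hzgt ν hν0 hνα)
      · rw [hEo, hγEm]
        exact hEm_mono_le (zsect ν) zdd hz1.le (hzle ν hν0 hνα)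
    refine ⟨hmem, hβγ ν hν0 hνα, ?_⟩
    intro E hE hβE
    have hElim0 : 0 < Elim := by
      rw [hElim]
      apply div_pos (by nlinarith) (by nlinarith)
    have hEopb : Eo < pb := by
      rw [hEo, div_lt_iff₀ (by nlinarith)]
      nlinarith
    have hE0 : 0 < E := lt_trans hElim0 hE.1
    have hpbE : 0 < pb - E := by have := hE.2; linarith
    have hw1 : 1 < 1 + X * E / (pb - E) := by
      have : 0 < X * E / (pb - E) := div_pos (mul_pos hX0 hE0) hpbE
      linarith
    have hden : (1 + X * E / (pb - E)) - 1 + X = X * pb / (pb - E) := by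
      field_simp [hpbE.ne']
      ring
    have hEw : pb * ((1 + X * E / (pb - E)) - 1) / ((1 + X * E / (pb - E)) - 1 + X) = E := by
      rw [hden, show (1 + X * E / (pb - E)) - 1 = X * E / (pb - E) from by ring]
      rw [div_eq_iff (by positivity : X * pb / (pb - E) ≠ 0)]
      field_simp [hpbE.ne']
    have hkW := hkey _ hw1
    rw [hEw] at hkW
    have hkz := hkey _ hz1
    rw [← hγEm] at hkz
    have hβγν := hβγ ν hν0 hνα
    have hgeq : (X - ((1 + X * E / (pb - E)) * Real.log (1 + X * E / (pb - E))
          - (1 + X * E / (pb - E)) + 1)) / (1 + X * E / (pb - E))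
        = (X - (zsect ν * Real.log (zsect ν) - zsect ν + 1)) / zsect ν := by
      have hcne : lam * W / (pb * Real.log 2) ≠ 0 := ne_of_gt (div_pos hlamW (mul_pos hpb hlog2))
      apply mul_left_cancel₀ hcne
      rw [← hkW, ← hkz, hβE, hβγν]
    have hweq : (1 + X * E / (pb - E)) = zsect ν :=
      (g_anti hX0).injOn (Set.mem_Ici.mpr hw1.le) (Set.mem_Ici.mpr hz1.le) hgeq
    calc E = pb * ((1 + X * E / (pb - E)) - 1) / ((1 + X * E / (pb - E)) - 1 + X) := hEw.symm
      _ = pb * (zsect ν - 1) / (zsect ν - 1 + X) := by rw [hweq]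
      _ = γ ν := (hγEm ν).symm
  · -- strict anti
    intro ν1 h1 ν2 h2 hlt
    obtain ⟨hz11, hz12⟩ := hzsect ν1 h1.1 h1.2
    obtain ⟨hz21, hz22⟩ := hzsect ν2 h2.1 h2.2
    have hν10 : (0:ℝ) ≤ ν1 := h1.1
    have hzlt : zsect ν2 < zsect ν1 := by
      by_contra h
      push_neg at h
      have hf : zsect ν1 * Real.log (zsect ν1) - zsect ν1 + 1
          ≤ zsect ν2 * Real.log (zsect ν2) - zsect ν2 + 1 :=
        f_mono.monotoneOn (Set.mem_Ici.mpr hz11.le) (Set.mem_Ici.mpr hz21.le) h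
      have hc1 : (0:ℝ) ≤ ν1 * pb * Real.log 2 / (lam * W) := by positivity
      have hcl : ν1 * pb * Real.log 2 / (lam * W) < ν2 * pb * Real.log 2 / (lam * W) := by
        have h3 : ν1 * (pb * Real.log 2 / (lam * W)) < ν2 * (pb * Real.log 2 / (lam * W)) :=
          mul_lt_mul_of_pos_right hlt (by positivity)
        calc ν1 * pb * Real.log 2 / (lam * W) = ν1 * (pb * Real.log 2 / (lam * W)) := by ring
          _ < ν2 * (pb * Real.log 2 / (lam * W)) := h3
          _ = ν2 * pb * Real.log 2 / (lam * W) := by ring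
      have hm1 : ν1 * pb * Real.log 2 / (lam * W) * zsect ν1
          ≤ ν1 * pb * Real.log 2 / (lam * W) * zsect ν2 :=
        mul_le_mul_of_nonneg_left h hc1
      have hm2 : ν1 * pb * Real.log 2 / (lam * W) * zsect ν2
          < ν2 * pb * Real.log 2 / (lam * W) * zsect ν2 :=
        mul_lt_mul_of_pos_right hcl (by linarith)
      nlinarith
    rw [hγEm, hγEm]
    exact hEm_mono (zsect ν2) (zsect ν1) hz21.le hzlt
  · -- γ 0 = Eo
    obtain ⟨hz1, hz2⟩ := hzsect 0 le_rfl hα0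
    have hz0eq : zsect 0 = zdd := by
      apply f_mono.injOn (Set.mem_Ici.mpr hz1.le) (Set.mem_Ici.mpr hzdd1.le)
      show zsect 0 * Real.log (zsect 0) - zsect 0 + 1 = zdd * Real.log zdd - zdd + 1
      rw [hzdd]
      linear_combination hz2
    rw [hγEm, hz0eq, hEo]
  · -- tendsto
    have hev : ∀ᶠ ν in nhdsWithin α (Set.Iio α), ν ∈ Set.Ico 0 α := by
      filter_upwards [self_mem_nhdsWithin,
        (eventually_gt_nhds hα0).filter_mono nhdsWithin_le_nhds] with ν h1 h2
      exact ⟨h2.le, h1⟩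
    have hub : ∀ ν : ℝ, 0 ≤ ν → ν < α → zsect ν ≤ zdag
        + (α - ν) * (pb * Real.log 2 * zdag / (lam * W * Real.log zdag)) := by
      intro ν hν0 hνα
      obtain ⟨hz1, hz2⟩ := hzsect ν hν0 hνα
      have hzg := hzgt ν hν0 hνα
      have hfl := f_lb hzdag1.le hzg.le
      have hXf : zsect ν * Real.log (zsect ν) - zsect ν + 1
          = X - ν * pb * Real.log 2 / (lam * W) * zsect ν := by linear_combination hz2
      have hcpos : (0:ℝ) ≤ ν * pb * Real.log 2 / (lam * W) := by positivity
      have hmon : ν * pb * Real.log 2 / (lam * W) * zdag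
          ≤ ν * pb * Real.log 2 / (lam * W) * zsect ν :=
        mul_le_mul_of_nonneg_left hzg.le hcpos
      have hstep : (zsect ν - zdag) * Real.log zdag
          ≤ (α - ν) * (pb * Real.log 2) / (lam * W) * zdag := by
        have hexp : (α - ν) * (pb * Real.log 2) / (lam * W) * zdag
            = α * pb * Real.log 2 / (lam * W) * zdag
              - ν * pb * Real.log 2 / (lam * W) * zdag := by ring
        rw [hexp, hcα]
        linarith [hfl, hXf, hmon, hzdag]
      have hq := (le_div_iff₀ hlzdag).mpr hstep
      have hid : (α - ν) * (pb * Real.log 2) / (lam * W) * zdag / Real.log zdag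
          = (α - ν) * (pb * Real.log 2 * zdag / (lam * W * Real.log zdag)) := by
        field_simp [hlzdag.ne', hlam.ne', hW.ne']
      rw [hid] at hq
      linarith
    have hubt : Filter.Tendsto (fun ν : ℝ => zdag
        + (α - ν) * (pb * Real.log 2 * zdag / (lam * W * Real.log zdag)))
        (nhdsWithin α (Set.Iio α)) (nhds zdag) := by
      have hc : Continuous (fun ν : ℝ => zdag
          + (α - ν) * (pb * Real.log 2 * zdag / (lam * W * Real.log zdag))) := by continuity
      have h := (hc.tendsto α).mono_left (nhdsWithin_le_nhds (s := Set.Iio α))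
      simpa using h
    have hzt : Filter.Tendsto zsect (nhdsWithin α (Set.Iio α)) (nhds zdag) := by
      apply tendsto_of_tendsto_of_tendsto_of_le_of_le' tendsto_const_nhds hubt
      · filter_upwards [hev] with ν hν
        exact (hzgt ν hν.1 hν.2).le
      · filter_upwards [hev] with ν hν
        exact hub ν hν.1 hν.2
    have hden0 : (zdag - 1) * σ2 + G * η * (p * G + pb * K) ≠ 0 := by
      have h1 : 0 < (zdag - 1) * σ2 := by nlinarith
      have h2 : 0 < G * η * (p * G + pb * K) := by positivity
      linarith
    have hcont : ContinuousAt
        (fun z : ℝ => pb * (z - 1) * σ2 / ((z - 1) * σ2 + G * η * (p * G + pb * K))) zdag := by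
      apply ContinuousAt.div
      · fun_prop
      · fun_prop
      · exact hden0
    have hval : pb * (zdag - 1) * σ2 / ((zdag - 1) * σ2 + G * η * (p * G + pb * K)) = Elim := by
      rw [hEmσ, hElim]
    have htend : Filter.Tendsto
        (fun z : ℝ => pb * (z - 1) * σ2 / ((z - 1) * σ2 + G * η * (p * G + pb * K)))
        (nhds zdag) (nhds Elim) := by
      have h := hcont.tendsto
      rwa [hval] at h
    exact (htend.comp hzt).congr (fun ν => (hγ ν).symm)
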